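/- Let g ∈ C and c ∈ C be conjugate in G = A ∗_C B. Then there exists a finite sequence c = c₀, c₁, …, c_t = g of elements of C such that for each i = 0, …, t−1 the elements c_i and c_{i+1} are conjugate in A or conjugate in B (i.e. there exists x ∈ A with x⁻¹c_i x = c_{i+1}, or x ∈ B with x⁻¹c_i x = c_{i+1}). -/

import Mathlib

open Monoid

universe u

section AuxiliaryLemmas

namespace AmalgAux

open Subgroup Function

open Monoid.PushoutI Monoid.CoprodI

variable {ι : Type*} {G : ι → Type*} [∀ i, Group (G i)] {H : Type*} [Group H]
  {φ : ∀ i, H →* G i}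

lemma ofCoprodI_word_prod (w : Word G) :
    ofCoprodI (φ := φ) w.prod = (w.toList.map fun p => PushoutI.of (φ := φ) p.1 p.2).prod := by
  rw [Word.prod, map_list_prod, List.map_map]
  congr 1

lemma aux_not_base_range (hinj : ∀ i, Function.Injective (φ i))
    (w : Word G) (hw : PushoutI.Reduced φ w) (i : ι) (hIdx : w.fstIdx ≠ some i)
    (u : G i) (hu : u ∉ (φ i).range) :
    (ofCoprodI (φ := φ) w.prod)⁻¹ * PushoutI.of i u * ofCoprodI (φ := φ) w.prod ∉
      (PushoutI.base φ).range := by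
  intro hmem
  have hufst : ∀ l ∈ w.toList.head?, i ≠ Sigma.fst l := Word.fstIdx_ne_iff.mp hIdx
  set L : List (Σ j, G j) :=
    (w.toList.map fun p => (⟨p.1, p.2⁻¹⟩ : Σ j, G j)).reverse ++ ⟨i, u⟩ :: w.toList with hL
  have hchain : L.Chain' fun l l' => Sigma.fst l ≠ Sigma.fst l' := by
    rw [hL]; show List.IsChain _ _; rw [List.isChain_append]
    refine ⟨?_, ?_, ?_⟩
    · rw [List.isChain_reverse, List.isChain_map]
      exact w.chain_ne.imp fun {a b} h => by exact fun hh => h hh.symm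
    · exact List.isChain_cons.2 ⟨fun y hy => hufst y hy, w.chain_ne⟩
    · intro x hx y hy
      simp only [List.head?_cons, Option.mem_def, Option.some.injEq] at hy
      subst hy
      rw [List.getLast?_reverse] at hx
      rw [List.head?_map] at hx
      obtain ⟨l, hl, rfl⟩ := Option.map_eq_some_iff.1 hx
      exact fun h => hufst l hl h.symm
  have hW : ∃ W : Word G, W.toList = L := by
    refine ⟨⟨L, ?_, hchain⟩, rfl⟩
    intro l hl
    rw [hL] at hl
    rcases List.mem_append.1 hl with hl | hl
    · rw [List.mem_reverse] at hl
      obtain ⟨p, hp, rfl⟩ := List.mem_map.1 hl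
      simpa using w.ne_one p hp
    · rcases List.mem_cons.1 hl with rfl | hl
      · intro h1; simp only at h1; rw [h1] at hu; exact hu (one_mem _)
      · exact w.ne_one l hl
  obtain ⟨W, hWL⟩ := hW
  have hWred : PushoutI.Reduced φ W := by
    intro l hl
    rw [hWL, hL] at hl
    rcases List.mem_append.1 hl with hl | hl
    · rw [List.mem_reverse] at hl
      obtain ⟨p, hp, rfl⟩ := List.mem_map.1 hl
      simpa [inv_mem_iff] using hw p hp
    · rcases List.mem_cons.1 hl with rfl | hl
      · exact hu
      · exact hw l hl
  have hprod : ofCoprodI (φ := φ) W.prod =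
      (ofCoprodI (φ := φ) w.prod)⁻¹ * PushoutI.of i u * ofCoprodI (φ := φ) w.prod := by
    rw [ofCoprodI_word_prod, ofCoprodI_word_prod, hWL, hL]
    rw [List.map_append, List.prod_append, List.map_cons, List.prod_cons]
    rw [List.map_reverse, List.map_map, mul_assoc]
    congr 1
    rw [List.prod_inv_reverse, List.map_map]
    congr 1
  have := hWred.eq_empty_of_mem_range hinj (by rw [hprod]; exact hmem)
  have : W.toList = [] := by rw [this]; rfl
  rw [hWL, hL] at this
  simp at this

/-- Chains of conjugations by single letters. -/
def ChainTo (a b : PushoutI φ) : Prop :=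
  ∃ (t : ℕ) (f : ℕ → PushoutI φ), f 0 = a ∧ f t = b ∧
    (∀ n ≤ t, f n ∈ (PushoutI.base φ).range) ∧
    ∀ n < t, ∃ i, ∃ x ∈ (PushoutI.of (φ := φ) i).range, x⁻¹ * f n * x = f (n + 1)

lemma ChainTo.refl (a : PushoutI φ) (ha : a ∈ (PushoutI.base φ).range) : ChainTo a a :=
  ⟨0, fun _ => a, rfl, rfl, fun _ _ => ha, fun n hn => absurd hn (Nat.not_lt_zero n)⟩

lemma ChainTo.extend {a b b' : PushoutI φ} (h : ChainTo a b)
    (hb' : b' ∈ (PushoutI.base φ).range)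
    (hstep : ∃ i, ∃ x ∈ (PushoutI.of (φ := φ) i).range, x⁻¹ * b * x = b') : ChainTo a b' := by
  obtain ⟨t, f, h0, ht, hmem, hsteps⟩ := h
  refine ⟨t + 1, fun n => if n ≤ t then f n else b', by simp [h0], by simp, ?_, ?_⟩
  · intro n hn
    by_cases h : n ≤ t
    · simpa [h] using hmem n h
    · simpa [h] using hb'
  · intro n hn
    by_cases h : n < t
    · have h1 : n ≤ t := le_of_lt h
      have h2 : n + 1 ≤ t := h
      simpa [h1, h2] using hsteps n h
    · have hn' : n = t := by omega
      have h2 : ¬ (n + 1 ≤ t) := by omega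
      simpa [hn', h2, ht] using hstep

lemma key_chain (hinj : ∀ i, Function.Injective (φ i)) (w : Word G) :
    PushoutI.Reduced φ w → ∀ c : H,
    (ofCoprodI (φ := φ) w.prod)⁻¹ * PushoutI.base φ c * ofCoprodI (φ := φ) w.prod ∈
      (PushoutI.base φ).range →
    ChainTo ((ofCoprodI (φ := φ) w.prod)⁻¹ * PushoutI.base φ c * ofCoprodI (φ := φ) w.prod)
      (PushoutI.base φ c) := by
  induction w using Word.consRecOn with
  | empty =>
    intro _ c _
    have : ofCoprodI (φ := φ) (Word.prod Word.empty) = 1 := by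
      rw [Word.prod_empty, map_one]
    rw [this]
    simpa using ChainTo.refl (PushoutI.base φ c) ⟨c, rfl⟩
  | cons i g w hIdx hg1 ih =>
    intro hw c hmem
    have htl : (Word.cons g w hIdx hg1).toList = ⟨i, g⟩ :: w.toList := rfl
    have hred_tail : PushoutI.Reduced φ w := fun l hl => hw l (by rw [htl]; exact List.mem_cons_of_mem _ hl)
    have hg_range : g ∉ (φ i).range := hw ⟨i, g⟩ (by rw [htl]; exact List.mem_cons_self)
    set z := ofCoprodI (φ := φ) w.prod with hz
    have hprodc : ofCoprodI (φ := φ) (Word.cons g w hIdx hg1).prod = PushoutI.of i g * z := by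
      rw [Word.prod_cons, map_mul, ofCoprodI_of]
    set u := g⁻¹ * φ i c * g with hu_def
    have h1 : PushoutI.of (φ := φ) i u = (PushoutI.of i g)⁻¹ * PushoutI.base φ c * PushoutI.of i g := by
      rw [hu_def, map_mul, map_mul, map_inv, PushoutI.of_apply_eq_base]
    have hconj_eq : (PushoutI.of i g * z)⁻¹ * PushoutI.base φ c * (PushoutI.of i g * z) =
        z⁻¹ * PushoutI.of (φ := φ) i u * z := by
      rw [h1]; simp [mul_assoc]
    rw [hprodc, hconj_eq] at hmem ⊢
    have hu_mem : u ∈ (φ i).range := by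
      by_contra hu
      exact aux_not_base_range hinj w hred_tail i hIdx u hu hmem
    obtain ⟨c', hc'⟩ := hu_mem
    have hbase : PushoutI.of (φ := φ) i u = PushoutI.base φ c' := by
      rw [← hc', PushoutI.of_apply_eq_base]
    rw [hbase] at hmem ⊢
    refine (ih hred_tail c' hmem).extend ⟨c, rfl⟩ ⟨i, (PushoutI.of i g)⁻¹, inv_mem ⟨g, rfl⟩, ?_⟩
    rw [← hbase, h1]
    simp [mul_assoc]

lemma exists_decomp (hinj : ∀ i, Function.Injective (φ i)) (x : PushoutI φ) :
    ∃ (h : H) (w : Word G), PushoutI.Reduced φ w ∧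
      x = PushoutI.base φ h * ofCoprodI (φ := φ) w.prod := by
  classical
  obtain ⟨d⟩ := Monoid.PushoutI.NormalWord.transversal_nonempty φ hinj
  set nw := Monoid.PushoutI.NormalWord.equiv (d := d) x with hnw
  refine ⟨nw.head, nw.toWord, ?_, ?_⟩
  · intro l hl hlr
    have hset : l.2 ∈ d.set l.1 := nw.normalized l.1 l.2 (by exact hl)
    have hne : l.2 ≠ 1 := nw.toWord.ne_one l hl
    have hcompl := (d.compl l.1).injective (a₁ := (⟨l.2, hlr⟩, ⟨1, d.one_mem l.1⟩))
      (a₂ := (⟨1, one_mem _⟩, ⟨l.2, hset⟩)) (by simp)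
    apply hne
    have := congrArg (fun p => (p.1 : G l.1)) hcompl
    simpa using this
  · have := (Monoid.PushoutI.NormalWord.equiv (d := d)).symm_apply_apply x
    rw [← hnw] at this
    exact this.symm

lemma conj_chain_generic [Nonempty ι] (hinj : ∀ i, Function.Injective (φ i)) (x : PushoutI φ) (c : H)
    (hc : x⁻¹ * PushoutI.base φ c * x ∈ (PushoutI.base φ).range) :
    ChainTo (x⁻¹ * PushoutI.base φ c * x) (PushoutI.base φ c) := by
  obtain ⟨h, w, hw, rfl⟩ := exists_decomp hinj x
  set z := ofCoprodI (φ := φ) w.prod with hz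
  have heq : (PushoutI.base φ h * z)⁻¹ * PushoutI.base φ c * (PushoutI.base φ h * z) =
      z⁻¹ * PushoutI.base φ (h⁻¹ * c * h) * z := by
    rw [map_mul, map_mul, map_inv]
    simp [mul_assoc]
  rw [heq] at hc ⊢
  refine (key_chain hinj w hw (h⁻¹ * c * h) hc).extend ⟨c, rfl⟩ ?_
  refine ⟨Classical.arbitrary ι, (PushoutI.base φ h)⁻¹, ?_, ?_⟩
  · exact inv_mem ⟨φ _ h, PushoutI.of_apply_eq_base φ _ h⟩
  · rw [map_mul, map_mul, map_inv]
    simp [mul_assoc]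

end AmalgAux

end AuxiliaryLemmas

/-- The two factors of the amalgam, indexed by `Bool`. -/
def Fac (A B : Type u) : Bool → Type u
  | true => A
  | false => B

instance FacGroup (A B : Type u) [Group A] [Group B] : (b : Bool) → Group (Fac A B b)
  | true => inferInstanceAs (Group A)
  | false => inferInstanceAs (Group B)

variable {A B C : Type u} [Group A] [Group B] [Group C]

/-- The family of monomorphisms `C → A`, `C → B`. -/
def amalgHom (φ : C →* A) (ψ : C →* B) : (b : Bool) → C →* Fac A B b
  | true => φ
  | false => ψ

variable (φ : C →* A) (ψ : C →* B)

/-- The amalgamated free product `G = A ∗_C B`, i.e. the pushout of `φ` and `ψ`. -/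
abbrev Amalg : Type u := Monoid.PushoutI (amalgHom φ ψ)

/-- The factor `A`, identified with its image in `G = A ∗_C B`. -/
def facA : Subgroup (Amalg φ ψ) := (Monoid.PushoutI.of (φ := amalgHom φ ψ) true).range

/-- The factor `B`, identified with its image in `G = A ∗_C B`. -/
def facB : Subgroup (Amalg φ ψ) := (Monoid.PushoutI.of (φ := amalgHom φ ψ) false).range

/-- The amalgamated subgroup `C`, identified with its image in `G = A ∗_C B`. -/
def amalgC : Subgroup (Amalg φ ψ) := (Monoid.PushoutI.base (amalgHom φ ψ)).range

/-- `c * g₁ ⋯ gₙ` (with the list `L = [g₁, …, gₙ]`) is a reduced form: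
`c ∈ C`, each `gᵢ ∈ (A ∪ B) ∖ C`, and consecutive letters lie in different factors. -/
def ReducedForm (c : Amalg φ ψ) (L : List (Amalg φ ψ)) : Prop :=
  c ∈ amalgC φ ψ ∧
  (∀ x ∈ L, (x ∈ facA φ ψ ∨ x ∈ facB φ ψ) ∧ x ∉ amalgC φ ψ) ∧
  L.Chain' (fun x y => (x ∈ facA φ ψ → y ∈ facB φ ψ) ∧ (x ∈ facB φ ψ → y ∈ facA φ ψ))

/-- A reduced form `c * g₁ ⋯ gₙ` is cyclically reduced if `n = 0`, or `n = 1` and the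
element is not conjugate to an element of `C`, or `n ≥ 2` and `g₁`, `gₙ` lie in different
factors. -/
def CyclicallyReducedForm (c : Amalg φ ψ) (L : List (Amalg φ ψ)) : Prop :=
  ReducedForm φ ψ c L ∧
  (L.length = 0 ∨
    (L.length = 1 ∧ ∀ x : Amalg φ ψ, x⁻¹ * (c * L.prod) * x ∉ amalgC φ ψ) ∨
    (2 ≤ L.length ∧ ∀ x y : Amalg φ ψ, x ∈ L.head? → y ∈ L.getLast? →
      ((x ∈ facA φ ψ → y ∈ facB φ ψ) ∧ (x ∈ facB φ ψ → y ∈ facA φ ψ))))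

/-- An element of `G = A ∗_C B` is cyclically reduced if it has a cyclically reduced
reduced form. -/
def CyclicallyReduced (g : Amalg φ ψ) : Prop :=
  ∃ (c : Amalg φ ψ) (L : List (Amalg φ ψ)), g = c * L.prod ∧ CyclicallyReducedForm φ ψ c L

/-- Conjugacy criterion, length 0 case: if `g, c ∈ C` are conjugate in `G = A ∗_C B` then
there is a finite chain `c = c₀, c₁, …, c_t = g` in `C` with adjacent terms conjugate
in `A` or in `B`. -/
theorem conj_in_C_chain
    (hφ : Function.Injective φ) (hψ : Function.Injective ψ)
    (g c : Amalg φ ψ) (hg : g ∈ amalgC φ ψ) (hc : c ∈ amalgC φ ψ)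
    (hconj : ∃ x : Amalg φ ψ, x⁻¹ * g * x = c) :
    ∃ (t : ℕ) (f : ℕ → Amalg φ ψ), f 0 = c ∧ f t = g ∧
      (∀ i ≤ t, f i ∈ amalgC φ ψ) ∧
      (∀ i < t, (∃ x ∈ facA φ ψ, x⁻¹ * f i * x = f (i + 1)) ∨
                (∃ x ∈ facB φ ψ, x⁻¹ * f i * x = f (i + 1))) := by
  obtain ⟨x, hx⟩ := hconj
  obtain ⟨cg, hcg⟩ := hg
  have hinj : ∀ i : Bool, Function.Injective (amalgHom φ ψ i) := by
    intro i
    cases i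
    · exact hψ
    · exact hφ
  have hcmem : x⁻¹ * Monoid.PushoutI.base (amalgHom φ ψ) cg * x ∈
      (Monoid.PushoutI.base (amalgHom φ ψ)).range := by
    rw [hcg, hx]; exact hc
  have hchain := AmalgAux.conj_chain_generic hinj x cg hcmem
  rw [hcg, hx] at hchain
  obtain ⟨t, f, h0, ht, hmem, hsteps⟩ := hchain
  refine ⟨t, f, h0, ht, fun n hn => hmem n hn, ?_⟩
  intro n hn
  obtain ⟨i, x', hx', hstep⟩ := hsteps n hn
  cases i
  · exact Or.inr ⟨x', hx', hstep⟩
  · exact Or.inl ⟨x', hx', hstep⟩
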